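/- Let B, B̂ ∈ ℝ^{k×d} with ‖B − B̂‖ ≤ ‖B‖, let V ∈ ℝ^{d×r} satisfy VᵀV = I_r and B̂ V Vᵀ = B̂, and let M ∈ ℝ^{d×d} be any matrix. Then ‖B V Vᵀ M V Vᵀ Bᵀ − B M Bᵀ‖ ≤ 8 · ‖B − B̂‖ · ‖B‖ · ‖M‖. -/

import Mathlib

open Matrix

open scoped Matrix.Norms.L2Operator in
/-- `opNorm` agrees with the scoped L2 operator norm on matrices. -/
lemma opNorm_eq_l2 {m n : Type*} [Fintype m] [Fintype n] [DecidableEq n]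
    (M : Matrix m n ℝ) :
    ‖LinearMap.toContinuousLinearMap (Matrix.toEuclideanLin M)‖ = ‖M‖ := rfl

/-- ℓ² operator norm of a real matrix (largest singular value). -/
noncomputable def opNorm {m n : Type*} [Fintype m] [Fintype n] [DecidableEq n]
    (M : Matrix m n ℝ) : ℝ :=
  ‖LinearMap.toContinuousLinearMap (Matrix.toEuclideanLin M)‖

set_option maxHeartbeats 1000000 in
open scoped Matrix.Norms.L2Operator in
/-- Perturbation bound: if `‖B − B̂‖ ≤ ‖B‖`, `VᵀV = I` and `B̂ V Vᵀ = B̂`, then for any `M`,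
`‖B V Vᵀ M V Vᵀ Bᵀ − B M Bᵀ‖ ≤ 8 ‖B − B̂‖ ‖B‖ ‖M‖`. -/
theorem projected_representation_perturbation {k d r : ℕ}
    (B Bhat : Matrix (Fin k) (Fin d) ℝ) (V : Matrix (Fin d) (Fin r) ℝ)
    (hclose : opNorm (B - Bhat) ≤ opNorm B)
    (hV : Vᵀ * V = 1) (hBhatV : Bhat * (V * Vᵀ) = Bhat)
    (M : Matrix (Fin d) (Fin d) ℝ) :
    opNorm (B * V * Vᵀ * M * V * Vᵀ * Bᵀ - B * M * Bᵀ) ≤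
      8 * opNorm (B - Bhat) * opNorm B * opNorm M := by
  simp only [opNorm, opNorm_eq_l2] at *
  set P : Matrix (Fin d) (Fin d) ℝ := V * Vᵀ with hP
  set E : Matrix (Fin k) (Fin d) ℝ := B - Bhat with hE
  -- transpose norm equality (real matrices)
  have htr : ∀ {a b : ℕ} (A : Matrix (Fin a) (Fin b) ℝ), ‖Aᵀ‖ = ‖A‖ := by
    intro a b A
    have := Matrix.l2_opNorm_conjTranspose A
    simpa [Matrix.conjTranspose_eq_transpose_of_trivial] using this
  -- ‖V‖ ≤ 1
  have hVnorm : ‖V‖ ≤ 1 := by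
    have h1 : ‖Vᵀ * V‖ = ‖V‖ * ‖V‖ := by
      have := Matrix.l2_opNorm_conjTranspose_mul_self V
      simpa [Matrix.conjTranspose_eq_transpose_of_trivial] using this
    have hone : ‖(1 : Matrix (Fin r) (Fin r) ℝ)‖ ≤ 1 := by
      rw [Matrix.cstar_norm_def, _root_.map_one]
      exact ContinuousLinearMap.norm_id_le
    have hsq : ‖V‖ * ‖V‖ ≤ 1 := by rw [← h1, hV]; exact hone
    nlinarith [norm_nonneg V]
  have hPnorm : ‖P‖ ≤ 1 := by
    calc ‖P‖ ≤ ‖V‖ * ‖Vᵀ‖ := Matrix.l2_opNorm_mul V Vᵀ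
    _ = ‖V‖ * ‖V‖ := by rw [htr]
    _ ≤ 1 := by nlinarith [norm_nonneg V]
  -- key difference bound
  have hBP : B * P - B = E * P - E := by
    rw [hE, Matrix.sub_mul, hBhatV]
    abel
  have hEP : ‖E * P‖ ≤ ‖E‖ := by
    calc ‖E * P‖ ≤ ‖E‖ * ‖P‖ := Matrix.l2_opNorm_mul E P
    _ ≤ ‖E‖ * 1 := by nlinarith [norm_nonneg E]
    _ = ‖E‖ := mul_one _
  have hD : ‖B * P - B‖ ≤ 2 * ‖E‖ := by
    rw [hBP]
    calc ‖E * P - E‖ ≤ ‖E * P‖ + ‖E‖ := norm_sub_le _ _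
    _ ≤ ‖E‖ + ‖E‖ := by linarith
    _ = 2 * ‖E‖ := by ring
  have hC : ‖B * P‖ ≤ 3 * ‖B‖ := by
    calc ‖B * P‖ = ‖B + (B * P - B)‖ := by congr 1; abel
    _ ≤ ‖B‖ + ‖B * P - B‖ := norm_add_le _ _
    _ ≤ ‖B‖ + 2 * ‖E‖ := by linarith
    _ ≤ 3 * ‖B‖ := by linarith
  -- rewrite goal
  have hgoal : B * V * Vᵀ * M * V * Vᵀ * Bᵀ - B * M * Bᵀ
      = (B * P - B) * (M * (B * P)ᵀ) + B * (M * (B * P - B)ᵀ) := by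
    simp only [hP, Matrix.transpose_mul, Matrix.transpose_sub, Matrix.transpose_transpose,
      Matrix.sub_mul, Matrix.mul_sub, Matrix.mul_assoc]
    abel
  rw [hgoal]
  have hBPt : ‖(B * P)ᵀ‖ = ‖B * P‖ := htr _
  have hDt : ‖(B * P - B)ᵀ‖ = ‖B * P - B‖ := htr _
  have h1 : ‖(B * P - B) * (M * (B * P)ᵀ)‖ ≤ ‖B * P - B‖ * (‖M‖ * ‖(B * P)ᵀ‖) :=
    le_trans (Matrix.l2_opNorm_mul _ _)
      (mul_le_mul_of_nonneg_left (Matrix.l2_opNorm_mul M (B * P)ᵀ) (norm_nonneg _))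
  have h2 : ‖B * (M * (B * P - B)ᵀ)‖ ≤ ‖B‖ * (‖M‖ * ‖(B * P - B)ᵀ‖) :=
    le_trans (Matrix.l2_opNorm_mul _ _)
      (mul_le_mul_of_nonneg_left (Matrix.l2_opNorm_mul M (B * P - B)ᵀ) (norm_nonneg _))
  calc ‖(B * P - B) * (M * (B * P)ᵀ) + B * (M * (B * P - B)ᵀ)‖
      ≤ ‖(B * P - B) * (M * (B * P)ᵀ)‖ + ‖B * (M * (B * P - B)ᵀ)‖ := norm_add_le _ _
    _ ≤ ‖B * P - B‖ * (‖M‖ * ‖(B * P)ᵀ‖) + ‖B‖ * (‖M‖ * ‖(B * P - B)ᵀ‖) := by linarith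
    _ ≤ (2 * ‖E‖) * (‖M‖ * (3 * ‖B‖)) + ‖B‖ * (‖M‖ * (2 * ‖E‖)) := by
        rw [hBPt, hDt]
        have g1 : ‖B * P - B‖ * (‖M‖ * ‖B * P‖) ≤ (2 * ‖E‖) * (‖M‖ * (3 * ‖B‖)) := by
          apply mul_le_mul hD _ (by positivity) (by positivity)
          exact mul_le_mul_of_nonneg_left hC (norm_nonneg M)
        have g2 : ‖B‖ * (‖M‖ * ‖B * P - B‖) ≤ ‖B‖ * (‖M‖ * (2 * ‖E‖)) :=
          mul_le_mul_of_nonneg_left (mul_le_mul_of_nonneg_left hD (norm_nonneg M))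
            (norm_nonneg B)
        linarith
    _ = 8 * ‖E‖ * ‖B‖ * ‖M‖ := by ring
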